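/- Let p be a prime and v a natural number with 1 ≤ v, and with 2 ≤ v in case p = 2. Let g be a p-adic integer with ‖g − 1‖ = p^(−v). Then for every natural number n ≥ 1, the quotient ring ℤ_[p] ⧸ Ideal.span {g^n − 1} is isomorphic as a ring to ZMod (p^(v + padicValNat p n)). -/

import Mathlib

section Aux

variable {p : ℕ} [hp : Fact p.Prime]

private lemma PadicIntAux.norm_le_of_dvd {a b : ℤ_[p]} (h : a ∣ b) : ‖b‖ ≤ ‖a‖ := by
  obtain ⟨c, rfl⟩ := h
  rw [norm_mul]
  exact (mul_le_mul_of_nonneg_left (PadicInt.norm_le_one c) (norm_nonneg a)).trans_eq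
    (mul_one _)

private lemma PadicIntAux.norm_sum_le {ι : Type*} (s : Finset ι) (f : ι → ℤ_[p]) (C : ℝ)
    (hC : 0 ≤ C) (h : ∀ i ∈ s, ‖f i‖ ≤ C) : ‖∑ i ∈ s, f i‖ ≤ C := by
  classical
  induction s using Finset.induction_on with
  | empty => simpa using hC
  | @insert a s ha ih =>
    rw [Finset.sum_insert ha]
    refine (PadicInt.nonarchimedean _ _).trans ?_
    exact max_le (h a (Finset.mem_insert_self a s))
      (ih fun i hi => h i (Finset.mem_insert_of_mem hi))

/-- coprime step -/
private lemma PadicIntAux.norm_pow_sub_one_of_not_dvd {g : ℤ_[p]} (hg1 : ‖g - 1‖ < 1)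
    {m : ℕ} (hm : ¬ p ∣ m) : ‖g ^ m - 1‖ = ‖g - 1‖ := by
  have hS : (∑ i ∈ Finset.range m, g ^ i) * (g - 1) = g ^ m - 1 := geom_sum_mul g m
  set S := ∑ i ∈ Finset.range m, g ^ i with hSdef
  have hm1 : ‖(m : ℤ_[p])‖ = 1 := by
    have hle : ‖(m : ℤ_[p])‖ ≤ 1 := PadicInt.norm_le_one _
    have h2 : ¬ ‖((m : ℤ) : ℤ_[p])‖ < 1 := by
      rw [PadicInt.norm_int_lt_one_iff_dvd]
      exact_mod_cast hm
    push_cast at h2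
    exact le_antisymm hle (not_lt.mp h2)
  have hdvd : (g - 1) ∣ (S - (m : ℤ_[p])) := by
    have h3 : S - (m : ℤ_[p]) = ∑ i ∈ Finset.range m, (g ^ i - 1) := by
      rw [Finset.sum_sub_distrib, Finset.sum_const, Finset.card_range]
      simp
      exact hSdef
    rw [h3]
    refine Finset.dvd_sum fun i _ => ?_
    simpa using sub_dvd_pow_sub_pow g 1 i
  have hlt : ‖S - (m : ℤ_[p])‖ < 1 := lt_of_le_of_lt (PadicIntAux.norm_le_of_dvd hdvd) hg1
  have hSnorm : ‖S‖ = 1 := by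
    have hne : ‖S - (m : ℤ_[p])‖ ≠ ‖(m : ℤ_[p])‖ := by rw [hm1]; exact ne_of_lt hlt
    have h4 : ‖S - (m : ℤ_[p]) + (m : ℤ_[p])‖ = max ‖S - (m : ℤ_[p])‖ ‖(m : ℤ_[p])‖ :=
      PadicInt.norm_add_eq_max_of_ne hne
    rw [sub_add_cancel, hm1, max_eq_right (le_of_lt (hm1 ▸ hlt))] at h4
    exact h4
  rw [← hS, norm_mul, hSnorm, one_mul]

/-- p-power step -/
private lemma PadicIntAux.norm_pow_p_sub_one {g : ℤ_[p]} {w : ℕ}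
    (hw : w + 2 ≤ p * w) (hg : ‖g - 1‖ = (p : ℝ) ^ (-(w : ℤ))) :
    ‖g ^ p - 1‖ = (p : ℝ) ^ (-((w : ℤ) + 1)) := by
  have hp1 : (1 : ℝ) < p := by exact_mod_cast hp.out.one_lt
  have hp0 : (0 : ℝ) < p := lt_trans one_pos hp1
  set x := g - 1 with hx
  have hgx : g = x + 1 := by rw [hx]; ring
  have hw1 : 1 ≤ w := by nlinarith [hp.out.two_le]
  -- expansion
  have hexp : g ^ p - 1 = ∑ k ∈ Finset.Ico 1 (p + 1), x ^ k * (p.choose k : ℤ_[p]) := by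
    rw [hgx, add_pow, Finset.range_eq_Ico,
      Finset.sum_eq_sum_Ico_succ_bot (by omega : 0 < p + 1)]
    simp only [pow_zero, one_pow, one_mul, Nat.choose_zero_right, Nat.cast_one, mul_one]
    rw [add_comm, add_sub_cancel_right]
  -- split off k = 1
  have hsplit : ∑ k ∈ Finset.Ico 1 (p + 1), x ^ k * (p.choose k : ℤ_[p])
      = x * (p : ℤ_[p]) + ∑ k ∈ Finset.Ico 2 (p + 1), x ^ k * (p.choose k : ℤ_[p]) := by
    rw [Finset.sum_eq_sum_Ico_succ_bot (by have := hp.out.two_le; omega : 1 < p + 1)]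
    simp
  have hxnorm : ‖x‖ = (p : ℝ) ^ (-(w : ℤ)) := hg
  -- norm of the main term
  have hmain : ‖x * (p : ℤ_[p])‖ = (p : ℝ) ^ (-((w : ℤ) + 1)) := by
    rw [norm_mul, hxnorm, PadicInt.norm_p, ← zpow_neg_one,
      ← zpow_add₀ (ne_of_gt hp0)]
    ring_nf
  -- norm of the rest
  have hrest : ‖∑ k ∈ Finset.Ico 2 (p + 1), x ^ k * (p.choose k : ℤ_[p])‖
      ≤ (p : ℝ) ^ (-((w : ℤ) + 2)) := by
    refine PadicIntAux.norm_sum_le _ _ _ (le_of_lt (zpow_pos hp0 _)) fun k hk => ?_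
    simp only [Finset.mem_Ico] at hk
    rw [norm_mul, norm_pow, hxnorm]
    rcases eq_or_lt_of_le (Nat.lt_succ_iff.mp hk.2) with heq | hlt
    · -- k = p
      rw [heq, Nat.choose_self, Nat.cast_one, norm_one, mul_one,
        ← zpow_natCast ((p : ℝ) ^ (-(w : ℤ))) p, ← zpow_mul]
      refine zpow_le_zpow_right₀ (le_of_lt hp1) ?_
      have h5 : (w : ℤ) + 2 ≤ (p : ℤ) * w := by exact_mod_cast hw
      nlinarith
    · -- 2 ≤ k < p : p ∣ choose p k
      have hdvd : p ∣ p.choose k := hp.out.dvd_choose_self (by omega) hlt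
      have hcn : ‖(p.choose k : ℤ_[p])‖ ≤ (p : ℝ) ^ (-(1 : ℤ)) := by
        obtain ⟨c, hc⟩ := hdvd
        rw [hc]
        push_cast
        rw [norm_mul, PadicInt.norm_p, zpow_neg_one]
        exact mul_le_of_le_one_right (by positivity) (PadicInt.norm_le_one _)
      calc ((p : ℝ) ^ (-(w : ℤ))) ^ k * ‖(p.choose k : ℤ_[p])‖
          ≤ ((p : ℝ) ^ (-(w : ℤ))) ^ k * (p : ℝ) ^ (-(1 : ℤ)) :=
            mul_le_mul_of_nonneg_left hcn (by positivity)
        _ = (p : ℝ) ^ (-(w : ℤ) * k + (-(1 : ℤ))) := by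
            rw [← zpow_natCast ((p : ℝ) ^ (-(w : ℤ))) k, ← zpow_mul,
              ← zpow_add₀ (ne_of_gt hp0)]
        _ ≤ (p : ℝ) ^ (-((w : ℤ) + 2)) := by
            refine zpow_le_zpow_right₀ (le_of_lt hp1) ?_
            have h2k : (2 : ℤ) ≤ (k : ℤ) := by exact_mod_cast hk.1
            have hw1' : (1 : ℤ) ≤ (w : ℤ) := by exact_mod_cast hw1
            nlinarith
  -- combine
  have hlt2 : ‖∑ k ∈ Finset.Ico 2 (p + 1), x ^ k * (p.choose k : ℤ_[p])‖
      < ‖x * (p : ℤ_[p])‖ := by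
    rw [hmain]
    exact lt_of_le_of_lt hrest (zpow_lt_zpow_right₀ hp1 (by omega))
  rw [hexp, hsplit, PadicInt.norm_add_eq_max_of_ne (ne_of_gt hlt2),
    max_eq_left (le_of_lt hlt2), hmain]

end Aux

/-- If `‖g − 1‖ = p ^ (−v)` with `v ≥ 1` (and `v ≥ 2` when `p = 2`), then for `n ≥ 1`
the quotient `ℤ_[p] ⧸ (g ^ n − 1)` is isomorphic to `ℤ/p^(v + ν_p(n))`. -/
theorem padic_quotient_span_pow_sub_one
    (p : ℕ) [Fact p.Prime] (v : ℕ) (hv : 1 ≤ v) (hv2 : p = 2 → 2 ≤ v)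
    (g : ℤ_[p]) (hg : ‖g - 1‖ = (p : ℝ) ^ (-(v : ℤ)))
    (n : ℕ) (hn : 1 ≤ n) :
    Nonempty ((ℤ_[p] ⧸ Ideal.span {g ^ n - 1}) ≃+*
      ZMod (p ^ (v + padicValNat p n))) := by
  have hp := (Fact.out : p.Prime)
  have hp1 : (1 : ℝ) < p := by exact_mod_cast hp.one_lt
  have hp0 : (0 : ℝ) < p := lt_trans one_pos hp1
  have hcond : ∀ w : ℕ, v ≤ w → w + 2 ≤ p * w := by
    intro w hw
    rcases eq_or_lt_of_le hp.two_le with h2 | h3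
    · have h4 := hv2 h2.symm
      rw [← h2]
      omega
    · nlinarith
  have hpt : ∀ t : ℕ, ‖g ^ (p ^ t) - 1‖ = (p : ℝ) ^ (-((v + t : ℕ) : ℤ)) := by
    intro t
    induction t with
    | zero => simpa using hg
    | succ t ih =>
      have key := PadicIntAux.norm_pow_p_sub_one (w := v + t)
        (hcond _ (by omega)) (g := g ^ (p ^ t)) ih
      rw [← pow_mul, ← pow_succ] at key
      rw [key, show -((((v + t : ℕ)) : ℤ) + 1) = -(((v + (t + 1) : ℕ)) : ℤ) from by push_cast; ring]
  set t := padicValNat p n with ht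
  set m := n / p ^ t with hm
  have hn0 : n ≠ 0 := by omega
  have hfact : n.factorization p = t := Nat.factorization_def n hp
  have hnm : p ^ t * m = n := by
    have := Nat.ordProj_mul_ordCompl_eq_self n p
    rwa [hfact] at this
  have hmnd : ¬ p ∣ m := by
    have := Nat.not_dvd_ordCompl hp hn0
    rwa [hfact] at this
  have hnorm : ‖g ^ n - 1‖ = (p : ℝ) ^ (-((v + t : ℕ) : ℤ)) := by
    have h1 : ‖g ^ (p ^ t) - 1‖ < 1 := by
      rw [hpt t]
      exact zpow_lt_one_of_neg₀ hp1 (by omega)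
    have h2 := PadicIntAux.norm_pow_sub_one_of_not_dvd (g := g ^ (p ^ t)) h1 hmnd
    rw [← pow_mul, hnm] at h2
    rw [h2, hpt t]
  set k := v + t with hk
  have hne : g ^ n - 1 ≠ 0 := by
    intro h
    rw [h, norm_zero] at hnorm
    exact absurd hnorm.symm (ne_of_gt (zpow_pos hp0 _))
  have hval : (g ^ n - 1).valuation = (k : ℤ) := by
    have h1 := PadicInt.norm_eq_zpow_neg_valuation hne
    rw [hnorm] at h1
    have h2 : -(k : ℤ) = -(g ^ n - 1).valuation :=
      zpow_right_injective₀ hp0 (ne_of_gt hp1) h1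
    exact (neg_injective h2).symm
  have hassoc : Associated ((p : ℤ_[p]) ^ k) (g ^ n - 1) := by
    have hspec := PadicInt.unitCoeff_spec hne
    rw [← Int.natAbs_natCast (g ^ n - 1).valuation, hval] at hspec
    simp only [Int.natAbs_natCast] at hspec
    exact ⟨PadicInt.unitCoeff hne, by rw [mul_comm, ← hspec]⟩
  have hspan : Ideal.span {g ^ n - 1} = Ideal.span {(p : ℤ_[p]) ^ k} :=
    (Ideal.span_singleton_eq_span_singleton.mpr hassoc).symm
  have hsurj : Function.Surjective (PadicInt.toZModPow (p := p) k) := by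
    intro z
    refine ⟨(z.val : ℤ_[p]), ?_⟩
    rw [map_natCast, ZMod.natCast_zmod_val]
  exact ⟨(Ideal.quotEquivOfEq (hspan.trans (PadicInt.ker_toZModPow k).symm)).trans
    (RingHom.quotientKerEquivOfSurjective hsurj)⟩
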